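/- Let G be a formal torus over the valuation ring F° of a finite extension F of W(k)[1/p] (k algebraically closed of characteristic p), r > 1 an integer, F_{cycl,r} = F(μ_{p^r}), and P ∈ G(F̄°) a point such that pⁿP ∈ G(F_{cycl,r}°) for some n ≥ 0 but p^{r−1}P ∉ G(F_{cycl,r}°). Then there exists σ ∈ Gal(F̄/F_{cycl,r}) such that σ(P) − P is a p^r-torsion point of G that is not p^{r−1}-torsion. -/

import Mathlib

open Finset

private lemma geom_block (a m k : ℕ) :
    ∑ j ∈ range (m * k), a ^ j
      = (∑ j ∈ range m, a ^ j) * ∑ i ∈ range k, (a ^ m) ^ i := by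
  induction k with
  | zero => simp
  | succ k ih =>
      rw [Nat.mul_succ, Finset.sum_range_add, ih, Finset.sum_range_succ, mul_add]
      congr 1
      rw [Finset.sum_mul]
      refine Finset.sum_congr rfl fun i _ => ?_
      rw [pow_add, ← pow_mul, mul_comm]

private lemma geom_val (p : ℕ) (hp : p.Prime) {a : ℕ} (ha : a ≡ 1 [MOD p ^ 2]) (d : ℕ) :
    ∃ u : ℕ, (∑ j ∈ range (p ^ d), a ^ j) = p ^ d * u ∧ ¬ p ∣ u := by
  have hp1 : 1 < p := hp.one_lt
  induction d with
  | zero =>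
      exact ⟨1, by simp, fun h => hp1.ne' (Nat.dvd_one.mp h)⟩
  | succ d ih =>
      obtain ⟨u, hu, hpu⟩ := ih
      have hb : a ^ p ^ d ≡ 1 [MOD p ^ 2] := by
        simpa using ha.pow (p ^ d)
      have hsum : ∀ q : ℕ, (∑ i ∈ range q, (a ^ p ^ d) ^ i) ≡ q [MOD p ^ 2] := by
        intro q
        induction q with
        | zero => simp only [Finset.sum_range_zero]; rfl
        | succ q ihq =>
            rw [Finset.sum_range_succ]
            have : (a ^ p ^ d) ^ q ≡ 1 [MOD p ^ 2] := by simpa using hb.pow q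
            exact ihq.add this
      set S := ∑ i ∈ range p, (a ^ p ^ d) ^ i with hS
      have hpp : p < p ^ 2 := by
        calc p = p ^ 1 := (pow_one p).symm
        _ < p ^ 2 := Nat.pow_lt_pow_right hp1 one_lt_two
      have hmod : S % p ^ 2 = p := by
        have := (hsum p)
        unfold Nat.ModEq at this
        rw [this, Nat.mod_eq_of_lt hpp]
      obtain ⟨q, hq⟩ : ∃ q, S = p ^ 2 * q + p :=
        ⟨S / p ^ 2, by nth_rewrite 1 [← Nat.div_add_mod S (p ^ 2)]; rw [hmod]⟩
      refine ⟨u * (p * q + 1), ?_, ?_⟩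
      · rw [pow_succ, geom_block, hu, ← hS, hq]; ring
      · intro h
        rcases (Nat.Prime.dvd_mul hp).mp h with h | h
        · exact hpu h
        · have : p ∣ 1 := (Nat.dvd_add_right ⟨q, rfl⟩).mp h
          exact hp1.ne' (Nat.dvd_one.mp this)

/-- **Boxall's trick; Serban.**  Let `F` be a complete discretely valued
field of characteristic `0` and residue characteristic `p`, `K` an algebraic closure of
`F` with (the unique) extension `w` of the valuation, and let
`F_{cycl,r} = F(μ_{p^r})` for an integer `r > 1`.  Identify the points of the formal
torus `G = (Ĝ_m)ⁿ` over the ring of integers of `K` with `n`-tuples of `1`-units.  If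
`P ∈ G(F̄°)` satisfies `pᵐP ∈ G(F_{cycl,r}°)` for some `m ≥ 0` but
`p^{r−1}P ∉ G(F_{cycl,r}°)`, then there is `σ ∈ Gal(F̄/F_{cycl,r})` such that
`σ(P) − P` (computed in the group law, i.e. componentwise `σ(Pᵢ)/Pᵢ`) is `p^r`-torsion
but not `p^{r−1}`-torsion. -/
theorem stmt_17 (p r : ℕ) (hp : p.Prime) (hr : 1 < r) (n : ℕ)
    (F : Type*) [Field F] [Valued F (WithZero (Multiplicative ℤ))]
    [CompleteSpace F] [CharZero F]
    [IsDiscreteValuationRing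
      ↥((Valued.v : Valuation F (WithZero (Multiplicative ℤ))).valuationSubring)]
    (hres : Valued.v (p : F) < 1)
    (w : Valuation (AlgebraicClosure F) NNReal)
    (hw : ∀ x : F, w (algebraMap F (AlgebraicClosure F) x) < 1 ↔ Valued.v x < 1)
    (P : Fin n → AlgebraicClosure F)
    -- `P` is a point of the formal torus: an `n`-tuple of `1`-units of `F̄°`
    (hP : ∀ i, w (P i) = 1 ∧ w (P i - 1) < 1)
    -- `pᵐ·P ∈ G(F_{cycl,r}°)` for some `m ≥ 0`
    (hdiv : ∃ m : ℕ, ∀ i, (P i) ^ (p ^ m) ∈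
      IntermediateField.adjoin F {x : AlgebraicClosure F | x ^ p ^ r = 1})
    -- but `p^{r-1}·P ∉ G(F_{cycl,r}°)`
    (hnot : ¬ ∀ i, (P i) ^ (p ^ (r - 1)) ∈
      IntermediateField.adjoin F {x : AlgebraicClosure F | x ^ p ^ r = 1}) :
    ∃ σ : AlgebraicClosure F ≃ₐ[↥(IntermediateField.adjoin F
        {x : AlgebraicClosure F | x ^ p ^ r = 1})] AlgebraicClosure F,
      (∀ i, (σ (P i) / P i) ^ p ^ r = 1) ∧
        ¬ ∀ i, (σ (P i) / P i) ^ p ^ (r - 1) = 1 := by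
  classical
  set L := IntermediateField.adjoin F {x : AlgebraicClosure F | x ^ p ^ r = 1} with hLdef
  have hp1 : 1 < p := hp.one_lt
  have hP0 : ∀ i, P i ≠ 0 := by
    intro i h
    have h1 := (hP i).1
    rw [h, map_zero] at h1
    exact zero_ne_one h1
  -- the minimal `s` with `P i ^ p ^ s ∈ L` for all `i`
  have hex : ∃ s : ℕ, ∀ i, P i ^ p ^ s ∈ L := hdiv
  set s := Nat.find hex with hs_def
  have hs : ∀ i, P i ^ p ^ s ∈ L := Nat.find_spec hex
  have hrs : r ≤ s := by
    by_contra h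
    push_neg at h
    apply hnot
    intro i
    have he : (P i ^ p ^ s) ^ p ^ (r - 1 - s) = P i ^ p ^ (r - 1) := by
      rw [← pow_mul, ← pow_add, show s + (r - 1 - s) = r - 1 from by omega]
    rw [← he]
    exact pow_mem (hs i) _
  obtain ⟨i0, hi0⟩ : ∃ i, P i ^ p ^ (s - 1) ∉ L := by
    have h := Nat.find_min hex (show s - 1 < s by omega)
    push_neg at h
    exact h
  -- algebraic / normal instances
  haveI : Algebra.IsAlgebraic (↥L) (AlgebraicClosure F) := Algebra.IsAlgebraic.tower_top (K := F) (↥L)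
  haveI : Normal (↥L) (AlgebraicClosure F) :=
    normal_iff.mpr fun x =>
      ⟨(Algebra.IsAlgebraic.isAlgebraic x).isIntegral, IsAlgClosed.splits _⟩
  haveI : CharZero (↥L) :=
    charZero_of_injective_algebraMap (algebraMap F (↥L)).injective
  -- an automorphism moving `P i0 ^ p ^ (s-1)`
  obtain ⟨σ, hσ⟩ : ∃ σ : AlgebraicClosure F ≃ₐ[↥L] AlgebraicClosure F, σ (P i0 ^ p ^ (s - 1)) ≠ P i0 ^ p ^ (s - 1) := by
    set x := P i0 ^ p ^ (s - 1) with hx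
    have hxint : IsIntegral (↥L) x := (Algebra.IsAlgebraic.isAlgebraic x).isIntegral
    have hsep : IsSeparable (↥L) x :=
      PerfectField.separable_of_irreducible (minpoly.irreducible hxint)
    have hx' : x ∉ (⊥ : Subalgebra (↥L) (AlgebraicClosure F)) := by
      rw [Algebra.mem_bot]
      rintro ⟨⟨y, hy⟩, hyx⟩
      apply hi0
      rw [← hyx]
      exact (⟨y, hy⟩ : ↥L).2
    obtain ⟨y, hxy, hconj⟩ :=
      (notMem_iff_exists_ne_and_isConjRoot hsep (IsAlgClosed.splits _)).mp hx'
    obtain ⟨σ, hσy⟩ := hconj.symm.exists_algEquiv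
    exact ⟨σ, by rw [hσy]; exact hxy.symm⟩
  -- automorphisms fix elements of L
  have hfix : ∀ (τ : AlgebraicClosure F ≃ₐ[↥L] AlgebraicClosure F) (z : AlgebraicClosure F), z ∈ L → τ z = z := by
    intro τ z hz
    exact τ.commutes ⟨z, hz⟩
  -- a primitive p^s-th root of unity
  haveI : NeZero (p ^ s) := ⟨pow_ne_zero s hp.ne_zero⟩
  haveI : NeZero ((p ^ s : ℕ) : AlgebraicClosure F) :=
    ⟨Nat.cast_ne_zero.mpr (pow_ne_zero s hp.ne_zero)⟩
  obtain ⟨ζ, hζ⟩ := HasEnoughRootsOfUnity.exists_primitiveRoot (AlgebraicClosure F) (p ^ s)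
  have hζ1 : ζ ^ p ^ s = 1 := hζ.pow_eq_one
  -- σ acts on p^s-th roots of unity by raising to the a-th power
  have hσζ : (σ ζ) ^ p ^ s = 1 := by rw [← map_pow, hζ1, map_one]
  obtain ⟨a, ha_lt, ha⟩ := hζ.eq_pow_of_pow_eq_one hσζ
  have haction : ∀ η : AlgebraicClosure F, η ^ p ^ s = 1 → σ η = η ^ a := by
    intro η hη
    obtain ⟨m, hm_lt, hm⟩ := hζ.eq_pow_of_pow_eq_one hη
    rw [← hm, ← map_pow] at *
    calc σ (ζ ^ m) = (σ ζ) ^ m := map_pow σ ζ m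
      _ = (ζ ^ a) ^ m := by rw [ha]
      _ = (ζ ^ m) ^ a := by rw [← pow_mul, mul_comm, pow_mul]
  -- a ≡ 1 mod p^r
  have hsr : p ^ (s - r) * p ^ r = p ^ s := by
    rw [← pow_add]; congr 1; omega
  have hmemζ : ζ ^ p ^ (s - r) ∈ L := by
    apply IntermediateField.subset_adjoin
    show (ζ ^ p ^ (s - r)) ^ p ^ r = 1
    rw [← pow_mul, hsr, hζ1]
  have hps1 : 1 < p ^ s := Nat.one_lt_pow (by omega) hp1
  have ha0 : 1 ≤ a := by
    rcases Nat.eq_zero_or_pos a with h0 | h1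
    · exfalso
      rw [h0, pow_zero] at ha
      have : ζ = 1 := σ.injective (by rw [← ha, map_one])
      exact (hζ.ne_one hps1) this
    · exact h1
  have hηps : (ζ ^ p ^ (s - r)) ^ p ^ s = 1 := by
    rw [← pow_mul, mul_comm, pow_mul, hζ1, one_pow]
  have hζfix : ζ ^ (a * p ^ (s - r)) = ζ ^ p ^ (s - r) := by
    rw [mul_comm, pow_mul, ← haction _ hηps, hfix σ _ hmemζ]
  have hζ0 : ζ ^ p ^ (s - r) ≠ 0 := by
    intro h
    rw [h, zero_pow (NeZero.ne _)] at hηps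
    exact zero_ne_one hηps
  have hone : ζ ^ (a * p ^ (s - r) - p ^ (s - r)) = 1 := by
    have hle : p ^ (s - r) ≤ a * p ^ (s - r) := Nat.le_mul_of_pos_left _ ha0
    have : ζ ^ (a * p ^ (s - r) - p ^ (s - r)) * ζ ^ p ^ (s - r)
        = 1 * ζ ^ p ^ (s - r) := by
      rw [← pow_add, Nat.sub_add_cancel hle, hζfix, one_mul]
    exact mul_right_cancel₀ hζ0 this
  have hdvd : p ^ r ∣ a - 1 := by
    have h := (hζ.pow_eq_one_iff_dvd _).mp hone
    rw [show a * p ^ (s - r) - p ^ (s - r) = (a - 1) * p ^ (s - r) by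
      rw [Nat.sub_mul, one_mul]] at h
    rw [← hsr, mul_comm (p ^ (s - r)) (p ^ r)] at h
    exact (Nat.mul_dvd_mul_iff_right (Nat.pow_pos (by omega) : 0 < p ^ (s - r))).mp h
  have ha1 : a ≡ 1 [MOD p ^ r] := ((Nat.modEq_iff_dvd' ha0).mpr hdvd).symm
  have ha2 : a ≡ 1 [MOD p ^ 2] :=
    Nat.ModEq.of_dvd (pow_dvd_pow p (by omega)) ha1
  -- the quotients η i and their torsion
  set η : Fin n → (AlgebraicClosure F) := fun i => σ (P i) / P i with hη_def
  have hηs : ∀ i, η i ^ p ^ s = 1 := by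
    intro i
    show (σ (P i) / P i) ^ p ^ s = 1
    rw [div_pow, ← map_pow, hfix σ _ (hs i), div_self (pow_ne_zero _ (hP0 i))]
  -- iteration of σ
  have hiter : ∀ (k : ℕ) (i : Fin n),
      (σ ^ k) (P i) = η i ^ (∑ j ∈ Finset.range k, a ^ j) * P i := by
    intro k i
    induction k with
    | zero => simp
    | succ k ih =>
        have hmul : σ ^ (k + 1) = σ * σ ^ k := by rw [pow_succ']
        rw [hmul, AlgEquiv.mul_apply, ih, map_mul, map_pow, haction _ (hηs i)]
        have hσP : σ (P i) = η i * P i := by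
          show σ (P i) = σ (P i) / P i * P i
          rw [div_mul_cancel₀ _ (hP0 i)]
        rw [hσP, geom_sum_succ]
        rw [pow_add, pow_mul, pow_one]
        ring
  obtain ⟨u, hu, hpu⟩ := geom_val p hp ha2 (s - r)
  refine ⟨σ ^ (p ^ (s - r)), ?_, ?_⟩
  · intro i
    rw [hiter, mul_div_assoc, div_self (hP0 i), mul_one, hu, ← pow_mul]
    have he : p ^ (s - r) * u * p ^ r = p ^ s * u := by
      rw [mul_right_comm, hsr]
    rw [he, pow_mul, hηs i, one_pow]
  · intro hall
    have h0 := hall i0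
    rw [hiter, mul_div_assoc, div_self (hP0 i0), mul_one, hu, ← pow_mul] at h0
    have he : p ^ (s - r) * u * p ^ (r - 1) = p ^ (s - 1) * u := by
      rw [mul_right_comm, ← pow_add]
      congr 2
      omega
    rw [he] at h0
    have hne : η i0 ^ p ^ (s - 1) ≠ 1 := by
      intro h
      apply hσ
      have hd : σ (P i0 ^ p ^ (s - 1)) / P i0 ^ p ^ (s - 1) = 1 := by
        rw [map_pow, ← div_pow]
        exact h
      exact (div_eq_one_iff_eq (pow_ne_zero _ (hP0 i0))).mp hd
    have hdvd1 : orderOf (η i0) ∣ p ^ s := orderOf_dvd_of_pow_eq_one (hηs i0)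
    have hdvd2 : orderOf (η i0) ∣ p ^ (s - 1) * u := orderOf_dvd_of_pow_eq_one h0
    obtain ⟨t, hts, hto⟩ := (Nat.dvd_prime_pow hp).mp hdvd1
    have hcop : Nat.Coprime (p ^ t) u :=
      Nat.Coprime.pow_left t ((Nat.Prime.coprime_iff_not_dvd hp).mpr hpu)
    have hdvd3 : orderOf (η i0) ∣ p ^ (s - 1) := by
      rw [hto] at hdvd2 ⊢
      exact Nat.Coprime.dvd_of_dvd_mul_right hcop hdvd2
    exact hne (orderOf_dvd_iff_pow_eq_one.mp hdvd3)
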